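/- arXiv:2209.14267 — 2 statements merged into one kernel-verified Lean document; each statement's English description precedes it below -/
import Mathlib

section
/- If a sparse vector z satisfies ‖z‖₀ < (1/2)(1 + 1/μ(D)) where μ(D) is the mutual coherence of a dictionary D with nonzero columns, then z is the unique sparsest solution of the system y = Dz, i.e., any z' with Dz' = Dz and z' ≠ z satisfies ‖z'‖₀ > ‖z‖₀. -/
open scoped BigOperators

/-- Classical uniqueness of sparse representations: if `‖z‖₀ < (1/2)(1 + 1/μ(D))` where
`μ(D)` is the mutual coherence of a dictionary with nonzero columns, then `z` is the unique
sparsest solution of `y = Dz`: any `z' ≠ z` with `Dz' = Dz` satisfies `‖z'‖₀ > ‖z‖₀`. -/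
theorem sparse_representation_unique {N M : ℕ} (D : Matrix (Fin N) (Fin M) ℝ)
    (hcols : ∀ j, (fun i => D i j) ≠ 0)
    (μ : ℝ)
    (hμ : μ = ⨆ p : {p : Fin M × Fin M // p.1 ≠ p.2},
      |∑ k, D k p.1.1 * D k p.1.2| /
        (Real.sqrt (∑ k, (D k p.1.1) ^ 2) * Real.sqrt (∑ k, (D k p.1.2) ^ 2)))
    (z : Fin M → ℝ)
    (hsparse : ((Finset.univ.filter (fun j => z j ≠ 0)).card : ℝ) <
      (1 / 2) * (1 + 1 / μ)) :
    ∀ z' : Fin M → ℝ, D.mulVec z' = D.mulVec z → z' ≠ z →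
      ((Finset.univ.filter (fun j => z j ≠ 0)).card : ℝ) <
        ((Finset.univ.filter (fun j => z' j ≠ 0)).card : ℝ) := by
  intro z' hDz hne
  set n : Fin M → ℝ := fun j => Real.sqrt (∑ k, (D k j) ^ 2) with hn
  set Sz := Finset.univ.filter (fun j => z j ≠ 0) with hSz
  set Sz' := Finset.univ.filter (fun j => z' j ≠ 0) with hSz'
  -- trivial case: z = 0
  by_cases hz0 : Sz.card = 0
  · rw [hz0]
    have hz : z = 0 := by
      funext j
      simp only [Pi.zero_apply]
      by_contra hj
      have : j ∈ Sz := by simp [hSz, hj]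
      rw [Finset.card_eq_zero.mp hz0] at this
      simp at this
    obtain ⟨j, hj⟩ : ∃ j, z' j ≠ 0 := by
      by_contra h
      push_neg at h
      apply hne; funext j; rw [h j, hz]; simp
    have : j ∈ Sz' := by simp [hSz', hj]
    have hpos : 0 < Sz'.card := Finset.card_pos.mpr ⟨j, this⟩
    exact_mod_cast hpos
  -- main case: z ≠ 0, so 1 ≤ card Sz and μ > 0
  have hz1 : (1 : ℝ) ≤ Sz.card := by exact_mod_cast Nat.one_le_iff_ne_zero.mpr hz0
  have hμpos : 0 < μ := by
    by_contra h
    push_neg at h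
    have : 1 / μ ≤ 0 := one_div_nonpos.mpr h
    linarith
  have hsumpos : ∀ j, 0 < ∑ k, (D k j) ^ 2 := by
    intro j
    have h := hcols j
    have h0 : (0:ℝ) ≤ ∑ k, (D k j) ^ 2 := Finset.sum_nonneg fun k _ => sq_nonneg _
    rcases lt_or_eq_of_le h0 with h1 | h1
    · exact h1
    · exfalso
      apply h
      funext k
      have := (Finset.sum_eq_zero_iff_of_nonneg (fun k _ => sq_nonneg (D k j))).mp h1.symm k
        (Finset.mem_univ k)
      exact pow_eq_zero_iff (n := 2) (by norm_num) |>.mp this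
  have hnpos : ∀ j, 0 < n j := fun j => Real.sqrt_pos.mpr (hsumpos j)
  have hcs : ∀ i j : Fin M, |∑ k, D k i * D k j| ≤ n i * n j := by
    intro i j
    have h := Finset.sum_mul_sq_le_sq_mul_sq Finset.univ (fun k => D k i) (fun k => D k j)
    have := Real.sqrt_le_sqrt h
    rwa [Real.sqrt_sq_eq_abs, Real.sqrt_mul (le_of_lt (hsumpos i))] at this
  have hbdd : BddAbove (Set.range fun p : {p : Fin M × Fin M // p.1 ≠ p.2} =>
      |∑ k, D k p.1.1 * D k p.1.2| / (n p.1.1 * n p.1.2)) := by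
    refine ⟨1, ?_⟩
    rintro x ⟨p, rfl⟩
    exact div_le_one_of_le₀ (hcs _ _) (le_of_lt (mul_pos (hnpos _) (hnpos _)))
  have hμle : ∀ i j : Fin M, i ≠ j → |∑ k, D k i * D k j| ≤ μ * (n i * n j) := by
    intro i j hij
    have h := le_ciSup hbdd ⟨(i, j), hij⟩
    rw [← hμ] at h
    have hne' : n i * n j ≠ 0 := ne_of_gt (mul_pos (hnpos i) (hnpos j))
    calc |∑ k, D k i * D k j|
        = (|∑ k, D k i * D k j| / (n i * n j)) * (n i * n j) :=
          (div_mul_cancel₀ _ hne').symm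
      _ ≤ μ * (n i * n j) :=
          mul_le_mul_of_nonneg_right h (le_of_lt (mul_pos (hnpos i) (hnpos j)))
  -- x = z' - z is a nonzero kernel vector
  set x : Fin M → ℝ := fun j => z' j - z j with hx
  set S := Finset.univ.filter (fun j => x j ≠ 0) with hS
  have hxne : x ≠ 0 := by
    intro h; apply hne; funext j
    have := congrFun h j; simp [hx] at this; linarith
  have hSne : S.Nonempty := by
    by_contra h
    rw [Finset.not_nonempty_iff_eq_empty] at h
    apply hxne; funext j
    show x j = 0
    by_contra hj
    have : j ∈ S := by simp [hS, hj]
    rw [h] at this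
    exact absurd this (Finset.notMem_empty j)
  have hDx : ∀ i, ∑ j, D i j * x j = 0 := by
    intro i
    have := congrFun hDz i
    simp only [Matrix.mulVec, dotProduct] at this
    simp only [hx, mul_sub, Finset.sum_sub_distrib]
    linarith
  obtain ⟨j0, hj0S, hj0max⟩ := S.exists_max_image (fun j => |x j| * n j) hSne
  have hxj0 : x j0 ≠ 0 := by simpa [hS] using hj0S
  set G : Fin M → ℝ := fun j => ∑ k, D k j0 * D k j with hG
  have key : ∑ j, G j * x j = 0 := by
    calc ∑ j, G j * x j
        = ∑ j, ∑ k, D k j0 * (D k j * x j) := by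
          simp only [hG, Finset.sum_mul, mul_assoc]
      _ = ∑ k, ∑ j, D k j0 * (D k j * x j) := Finset.sum_comm
      _ = ∑ k, D k j0 * ∑ j, D k j * x j := by simp [Finset.mul_sum]
      _ = 0 := by simp [hDx]
  have keyS : ∑ j ∈ S, G j * x j = 0 := by
    rw [← key]
    apply Finset.sum_subset (Finset.subset_univ S)
    intro j _ hj
    have : x j = 0 := by
      by_contra h
      exact hj (by simp [hS, h])
    simp [this]
  have hsplit : G j0 * x j0 = -∑ j ∈ S.erase j0, G j * x j := by
    have h2 : ∑ j ∈ S.erase j0, G j * x j + G j0 * x j0 = 0 := by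
      rw [Finset.sum_erase_add S _ hj0S, keyS]
    linarith
  have hGj0 : G j0 = n j0 ^ 2 := by
    have h1 : n j0 ^ 2 = ∑ k, (D k j0) ^ 2 := Real.sq_sqrt (hsumpos j0).le
    rw [h1, hG]
    exact Finset.sum_congr rfl fun k _ => (sq (D k j0)).symm
  -- the Gershgorin-style estimate
  have hbound : |x j0| * n j0 ^ 2 ≤ (S.erase j0).card * (μ * (n j0 * (|x j0| * n j0))) := by
    calc |x j0| * n j0 ^ 2 = |G j0 * x j0| := by
          rw [hGj0, abs_mul, abs_of_nonneg (sq_nonneg (n j0)), mul_comm]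
      _ = |∑ j ∈ S.erase j0, G j * x j| := by rw [hsplit, abs_neg]
      _ ≤ ∑ j ∈ S.erase j0, |G j * x j| := Finset.abs_sum_le_sum_abs _ _
      _ ≤ ∑ j ∈ S.erase j0, μ * (n j0 * (|x j0| * n j0)) := by
          apply Finset.sum_le_sum
          intro j hj
          have hjne : j ≠ j0 := Finset.ne_of_mem_erase hj
          have hjS : j ∈ S := Finset.mem_of_mem_erase hj
          rw [abs_mul]
          calc |G j| * |x j| ≤ (μ * (n j0 * n j)) * |x j| :=
                mul_le_mul_of_nonneg_right (hμle j0 j (Ne.symm hjne)) (abs_nonneg _)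
            _ = μ * (n j0 * (|x j| * n j)) := by ring
            _ ≤ μ * (n j0 * (|x j0| * n j0)) := by
                apply mul_le_mul_of_nonneg_left _ hμpos.le
                exact mul_le_mul_of_nonneg_left (hj0max j hjS) (hnpos j0).le
      _ = (S.erase j0).card * (μ * (n j0 * (|x j0| * n j0))) := by
          rw [Finset.sum_const, nsmul_eq_mul]
  have hcardS1 : ((S.erase j0).card : ℝ) = (S.card : ℝ) - 1 := by
    rw [Finset.card_erase_of_mem hj0S]
    have : 1 ≤ S.card := Finset.card_pos.mpr hSne
    push_cast [Nat.cast_sub this]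
    ring
  have hspark : 1 ≤ μ * ((S.card : ℝ) - 1) := by
    have hpos : 0 < |x j0| * n j0 ^ 2 :=
      mul_pos (abs_pos.mpr hxj0) (pow_pos (hnpos j0) 2)
    rw [hcardS1] at hbound
    have : |x j0| * n j0 ^ 2 * 1 ≤ |x j0| * n j0 ^ 2 * (μ * ((S.card : ℝ) - 1)) := by
      nlinarith [hbound]
    exact le_of_mul_le_mul_left (by linarith [this]) hpos
  -- support counting
  have hsub : S ⊆ Sz' ∪ Sz := by
    intro j hj
    have hxj : x j ≠ 0 := by simpa [hS] using hj
    rw [Finset.mem_union]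
    by_contra h
    push_neg at h
    have h1 : z' j = 0 := by
      by_contra h'
      exact absurd (by simp [hSz', h'] : j ∈ Sz') h.1
    have h2 : z j = 0 := by
      by_contra h'
      exact absurd (by simp [hSz, h'] : j ∈ Sz) h.2
    apply hxj
    simp [hx, h1, h2]
  have hcard : (S.card : ℝ) ≤ (Sz'.card : ℝ) + (Sz.card : ℝ) := by
    have h1 : S.card ≤ (Sz' ∪ Sz).card := Finset.card_le_card hsub
    have h2 : (Sz' ∪ Sz).card ≤ Sz'.card + Sz.card := Finset.card_union_le _ _
    exact_mod_cast h1.trans h2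
  have hfin : 1 / μ ≤ (S.card : ℝ) - 1 := by
    rw [div_le_iff₀ hμpos]
    linarith [hspark]
  linarith [hsparse, hcard, hfin]
end

section
/- For any matrix D with ℓ₂-normalized nonzero columns, the spark of D satisfies spark(D) ≥ 1 + 1/μ(D), where μ(D) is the mutual coherence. -/
open scoped BigOperators

/-- Spark bound via mutual coherence: for a matrix with ℓ₂-normalized columns,
`spark(D) ≥ 1 + 1/μ(D)`, i.e. every nonzero vector in the kernel of `D` has at least
`1 + 1/μ(D)` nonzero entries. -/
theorem spark_ge_one_add_inv_coherence {N M : ℕ} (D : Matrix (Fin N) (Fin M) ℝ)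
    (hnorm : ∀ j, ∑ i, (D i j) ^ 2 = 1)
    (μ : ℝ)
    (hμ : μ = ⨆ p : {p : Fin M × Fin M // p.1 ≠ p.2},
      |∑ k, D k p.1.1 * D k p.1.2|) :
    ∀ v : Fin M → ℝ, v ≠ 0 → D.mulVec v = 0 →
      1 + 1 / μ ≤ ((Finset.univ.filter (fun j => v j ≠ 0)).card : ℝ) := by
  intro v hv hDv
  set S := Finset.univ.filter (fun j => v j ≠ 0) with hS
  have hSne : S.Nonempty := by
    obtain ⟨j, hj⟩ := Function.ne_iff.mp hv
    exact ⟨j, by simpa [hS] using hj⟩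
  obtain ⟨j0, hj0S, hmax⟩ := S.exists_max_image (fun j => |v j|) hSne
  have hvj0 : v j0 ≠ 0 := by
    have := hj0S; simp [hS] at this; exact this
  set g : Fin M → Fin M → ℝ := fun j k => ∑ i, D i j * D i k with hg
  have hgv : ∑ k, g j0 k * v k = 0 := by
    have h1 : ∑ k, g j0 k * v k = ∑ i, D i j0 * (D.mulVec v i) := by
      simp only [Matrix.mulVec, dotProduct, hg, Finset.mul_sum, Finset.sum_mul]
      rw [Finset.sum_comm]
      apply Finset.sum_congr rfl; intro i _
      apply Finset.sum_congr rfl; intro k _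
      ring
    rw [h1, hDv]; simp
  have hgjj : g j0 j0 = 1 := by
    have := hnorm j0
    simpa [hg, sq] using this
  have hkey : v j0 = -∑ k ∈ Finset.univ.erase j0, g j0 k * v k := by
    have h2 := hgv
    rw [← Finset.add_sum_erase _ _ (Finset.mem_univ j0), hgjj, one_mul] at h2
    linarith
  -- bound each off-diagonal Gram entry by μ
  have hgle : ∀ k : Fin M, k ≠ j0 → |g j0 k| ≤ μ := by
    intro k hk
    haveI : Nonempty {p : Fin M × Fin M // p.1 ≠ p.2} := ⟨⟨(j0, k), fun h => hk h.symm⟩⟩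
    rw [hμ]
    exact le_ciSup (f := fun p : {p : Fin M × Fin M // p.1 ≠ p.2} =>
        |∑ i, D i p.1.1 * D i p.1.2|)
      (Set.Finite.bddAbove (Set.finite_range _))
      (⟨(j0, k), fun h => hk h.symm⟩ : {p : Fin M × Fin M // p.1 ≠ p.2})
  have habs : |v j0| ≤ μ * ∑ k ∈ S.erase j0, |v k| := by
    calc |v j0| = |∑ k ∈ Finset.univ.erase j0, g j0 k * v k| := by rw [hkey, abs_neg]
    _ ≤ ∑ k ∈ Finset.univ.erase j0, |g j0 k * v k| := Finset.abs_sum_le_sum_abs _ _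
    _ = ∑ k ∈ S.erase j0, |g j0 k * v k| := by
        apply (Finset.sum_subset ?_ ?_).symm
        · intro k hk
          simp only [Finset.mem_erase] at hk ⊢
          exact ⟨hk.1, Finset.mem_univ _⟩
        · intro k hk hk'
          have hkj : k ≠ j0 := (Finset.mem_erase.mp hk).1
          have hv0 : v k = 0 := by
            by_contra h
            exact hk' (Finset.mem_erase.mpr ⟨hkj, by simp [hS, h]⟩)
          rw [hv0, mul_zero, abs_zero]
    _ ≤ ∑ k ∈ S.erase j0, μ * |v k| := by
        apply Finset.sum_le_sum
        intro k hk
        rw [abs_mul]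
        exact mul_le_mul_of_nonneg_right (hgle k (Finset.mem_erase.mp hk).1) (abs_nonneg _)
    _ = μ * ∑ k ∈ S.erase j0, |v k| := by rw [Finset.mul_sum]
  have hsum : ∑ k ∈ S.erase j0, |v k| ≤ ((S.card : ℝ) - 1) * |v j0| := by
    calc ∑ k ∈ S.erase j0, |v k| ≤ ∑ _k ∈ S.erase j0, |v j0| := by
          apply Finset.sum_le_sum
          intro k hk
          exact hmax k (Finset.mem_of_mem_erase hk)
    _ = ((S.erase j0).card : ℝ) * |v j0| := by rw [Finset.sum_const, nsmul_eq_mul]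
    _ = ((S.card : ℝ) - 1) * |v j0| := by
          rw [Finset.card_erase_of_mem hj0S]
          have : (1 : ℕ) ≤ S.card := Finset.card_pos.mpr hSne
          push_cast [Nat.cast_sub this]
          ring
  have hpos : 0 < |v j0| := abs_pos.mpr hvj0
  have hμ0 : 0 ≤ μ := by
    obtain ⟨k, hk⟩ : ∃ k, k ∈ S.erase j0 := by
      by_contra h
      push_neg at h
      have : ∑ k ∈ S.erase j0, |v k| = 0 := Finset.sum_eq_zero (fun k hk => absurd hk (h k))
      rw [this, mul_zero] at habs
      linarith
    exact le_trans (abs_nonneg _) (hgle k (Finset.mem_erase.mp hk).1)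
  have h1le : 1 ≤ μ * ((S.card : ℝ) - 1) := by
    have h3 : |v j0| ≤ μ * (((S.card : ℝ) - 1) * |v j0|) :=
      le_trans habs (mul_le_mul_of_nonneg_left hsum hμ0)
    nlinarith
  have hμpos : 0 < μ := by
    rcases lt_or_eq_of_le hμ0 with h | h
    · exact h
    · exfalso; rw [← h] at h1le; linarith
  have h4 : 1 / μ ≤ (S.card : ℝ) - 1 := by
    rw [div_le_iff₀ hμpos]; nlinarith
  linarith
end
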